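/- arXiv:1507.07485 — 4 statements merged into one kernel-verified Lean document; each statement's English description precedes it below -/
import Mathlib

section
/- Let a = (a_1, a_2, ...) be a sequence of nonzero complex numbers with a_2 + a_1^2 ≠ 0. Then the algebra Λ_a is finitely generated as a module over its polynomial subalgebra C[Q_1, Q_2] (where Q_1 = a_1 y + z and Q_2 = a_2 y^2 + z^2); in particular Λ_a is a finitely generated C-algebra. -/
open MvPolynomial

noncomputable section

/-- The polynomial ring `ℂ[y,z]`, with `y = X 0`, `z = X 1`. -/
abbrev R2 := MvPolynomial (Fin 2) ℂ

/-- The generalized power sum `Q_i = a_i y^i + z^i`. -/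
def Q2 (a : ℕ → ℂ) (i : ℕ) : R2 := C (a i) * X 0 ^ i + X 1 ^ i

/-- The algebra `Λ_a` generated by the `Q_i`, `i ≥ 1`. -/
def Lam (a : ℕ → ℂ) : Subalgebra ℂ R2 :=
  Algebra.adjoin ℂ {f : R2 | ∃ i : ℕ, 1 ≤ i ∧ f = Q2 a i}

/-- The subalgebra `ℂ[Q_1, Q_2]`. -/
def Bsub (a : ℕ → ℂ) : Subalgebra ℂ R2 :=
  Algebra.adjoin ℂ {Q2 a 1, Q2 a 2}

lemma smul_def' (a : ℕ → ℂ) (b : ↥(Bsub a)) (x : R2) : b • x = (↑b : R2) * x :=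
  (Algebra.smul_def b x).trans (by norm_num [Subalgebra.algebraMap_eq])

lemma C_mem_Bsub (a : ℕ → ℂ) (c : ℂ) : C c ∈ Bsub a := by
  have := (Bsub a).algebraMap_mem c
  rwa [MvPolynomial.algebraMap_eq] at this

lemma Q1_mem (a : ℕ → ℂ) : Q2 a 1 ∈ Bsub a :=
  Algebra.subset_adjoin (by simp)

lemma Q2_mem (a : ℕ → ℂ) : Q2 a 2 ∈ Bsub a :=
  Algebra.subset_adjoin (by simp)

/-- `R2` is spanned by `{1, y}` over `ℂ[Q_1,Q_2]`. -/
lemma span_top (a : ℕ → ℂ) (h2 : a 2 + (a 1) ^ 2 ≠ 0) :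
    (Submodule.span (Bsub a) ({1, X 0} : Set R2) : Submodule (Bsub a) R2) = ⊤ := by
  set c : ℂ := (a 2 + (a 1) ^ 2)⁻¹ with hc
  set M : Submodule (Bsub a) R2 := Submodule.span (Bsub a) ({1, X 0} : Set R2) with hM
  have h1M : (1 : R2) ∈ M := Submodule.subset_span (by simp)
  have hyM : (X 0 : R2) ∈ M := Submodule.subset_span (by simp)
  -- key identity: (a2+a1²) y² = (Q2 - Q1²) + 2 a1 Q1 y
  have key : C (a 2 + (a 1) ^ 2) * (X 0 : R2) ^ 2
      = (Q2 a 2 - (Q2 a 1) ^ 2) + C (2 * a 1) * (Q2 a 1 * X 0) := by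
    simp only [Q2, map_add, map_mul, map_pow, map_ofNat, C_mul]
    ring
  have hy2 : (X 0 : R2) ^ 2
      = (C c * (Q2 a 2 - (Q2 a 1) ^ 2)) * 1 + (C (2 * a 1 * c) * Q2 a 1) * X 0 := by
    have hcc : (C c : R2) * C (a 2 + (a 1) ^ 2) = 1 := by
      rw [← C_mul, hc, inv_mul_cancel₀ h2, C_1]
    calc (X 0 : R2) ^ 2 = (C c * C (a 2 + (a 1)^2)) * (X 0 : R2)^2 := by rw [hcc, one_mul]
    _ = C c * ((Q2 a 2 - (Q2 a 1) ^ 2) + C (2 * a 1) * (Q2 a 1 * X 0)) := by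
        rw [mul_assoc, key]
    _ = (C c * (Q2 a 2 - (Q2 a 1) ^ 2)) * 1 + (C (2 * a 1 * c) * Q2 a 1) * X 0 := by
        simp only [C_mul]; ring
  have hy2M : (X 0 : R2) ^ 2 ∈ M := by
    rw [hy2]
    refine M.add_mem ?_ ?_
    · have : (⟨C c * (Q2 a 2 - (Q2 a 1) ^ 2),
        (Bsub a).mul_mem (C_mem_Bsub a c)
          ((Bsub a).sub_mem (Q2_mem a) (pow_mem (Q1_mem a) 2))⟩ : Bsub a) • (1 : R2) ∈ M :=
        M.smul_mem _ h1M
      rwa [smul_def'] at this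
    · have : (⟨C (2 * a 1 * c) * Q2 a 1,
        (Bsub a).mul_mem (C_mem_Bsub a _) (Q1_mem a)⟩ : Bsub a) • (X 0 : R2) ∈ M :=
        M.smul_mem _ hyM
      rwa [smul_def'] at this
  -- z = Q1 - a1 y
  have hz : (X 1 : R2) = Q2 a 1 * 1 + C (-(a 1)) * X 0 := by
    simp only [Q2, map_neg, pow_one]; ring
  have hzM : (X 1 : R2) ∈ M := by
    rw [hz]
    refine M.add_mem ?_ ?_
    · have : (⟨Q2 a 1, Q1_mem a⟩ : Bsub a) • (1 : R2) ∈ M := M.smul_mem _ h1M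
      rwa [smul_def'] at this
    · have : (⟨C (-(a 1)), C_mem_Bsub a _⟩ : Bsub a) • (X 0 : R2) ∈ M := M.smul_mem _ hyM
      rwa [smul_def'] at this
  -- z y  = Q1 y - a1 y²
  have hzy : (X 1 : R2) * X 0 = Q2 a 1 * X 0 + C (-(a 1)) * (X 0 ^ 2) := by
    simp only [Q2, map_neg, pow_one]; ring
  have hzyM : (X 1 : R2) * X 0 ∈ M := by
    rw [hzy]
    refine M.add_mem ?_ ?_
    · have : (⟨Q2 a 1, Q1_mem a⟩ : Bsub a) • (X 0 : R2) ∈ M := M.smul_mem _ hyM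
      rwa [smul_def'] at this
    · have : (⟨C (-(a 1)), C_mem_Bsub a _⟩ : Bsub a) • ((X 0 : R2) ^ 2) ∈ M :=
        M.smul_mem _ hy2M
      rwa [smul_def'] at this
  -- M is closed under multiplication by X i
  have hmulX : ∀ (i : Fin 2), ∀ m ∈ M, (X i : R2) * m ∈ M := by
    intro i m hm
    induction hm using Submodule.span_induction with
    | mem x hx =>
      rcases hx with rfl | hx
      · fin_cases i
        · simpa using hyM
        · simpa using hzM
      · rcases hx with rfl
        fin_cases i
        · simpa [sq] using hy2M
        · exact hzyM
    | zero => simpa using M.zero_mem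
    | add x y _ _ hx hy => rw [mul_add]; exact M.add_mem hx hy
    | smul b x _ hx =>
      rw [smul_def', ← mul_assoc, mul_comm (X i : R2) (↑b : R2), mul_assoc, ← smul_def']
      exact M.smul_mem _ hx
  -- conclude M = ⊤
  rw [eq_top_iff]
  intro p hp
  clear hp
  induction p using MvPolynomial.induction_on with
  | C r =>
    have : (⟨C r, C_mem_Bsub a r⟩ : Bsub a) • (1 : R2) ∈ M := M.smul_mem _ h1M
    rwa [smul_def', mul_one] at this
  | add p q hp hq => exact M.add_mem hp hq
  | mul_X p i hp => rw [mul_comm]; exact hmulX i p hp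

/-- If `a` is a sequence of nonzero complex numbers with `a_2 + a_1^2 ≠ 0`, then `Λ_a` is
finitely generated as a module over `ℂ[Q_1, Q_2]`; in particular it is a finitely
generated `ℂ`-algebra. -/
theorem lambda_finite_over_CQ1Q2 (a : ℕ → ℂ) (ha : ∀ i : ℕ, 1 ≤ i → a i ≠ 0)
    (h2 : a 2 + (a 1) ^ 2 ≠ 0) :
    (∃ S : Finset R2, (↑S : Set R2) ⊆ (Lam a : Set R2) ∧
      (Lam a : Set R2) ⊆ (Submodule.span (Bsub a) (↑S : Set R2) : Set R2)) ∧
    (Lam a).FG := by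
  have hQmem : ∀ i : ℕ, 1 ≤ i → Q2 a i ∈ Lam a := fun i hi =>
    Algebra.subset_adjoin ⟨i, hi, rfl⟩
  have hBle : Bsub a ≤ Lam a := by
    apply Algebra.adjoin_le
    rintro f hf
    rcases hf with rfl | hf
    · exact hQmem 1 le_rfl
    · rcases hf with rfl
      exact hQmem 2 (by norm_num)
  -- B is Noetherian
  have hfgB : (Bsub a).FG := by
    have h := @Subalgebra.fg_adjoin_finset ℂ R2 _ _ _ ({Q2 a 1, Q2 a 2} : Finset R2)
    have : ((({Q2 a 1, Q2 a 2} : Finset R2) : Set R2)) = ({Q2 a 1, Q2 a 2} : Set R2) := by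
      simp
    rwa [Bsub, ← this]
  haveI : Algebra.FiniteType ℂ ↥(Bsub a) := (Subalgebra.fg_iff_finiteType _).1 hfgB
  haveI : IsNoetherianRing ↥(Bsub a) := Algebra.FiniteType.isNoetherianRing ℂ _
  -- R2 is a finite B-module
  haveI : Module.Finite (Bsub a) R2 :=
    ⟨by rw [← span_top a h2]; exact Submodule.fg_span (Set.toFinite _)⟩
  haveI : IsNoetherian (Bsub a) R2 := inferInstance
  -- Lam a as a B-submodule of R2
  set L : Submodule (Bsub a) R2 :=
    { carrier := (Lam a : Set R2)
      add_mem' := fun h1 h2 => add_mem h1 h2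
      zero_mem' := zero_mem _
      smul_mem' := fun b x hx => by
        rw [smul_def']
        exact mul_mem (hBle b.2) hx } with hL
  have hLfg : L.FG := IsNoetherian.noetherian L
  obtain ⟨S, hS⟩ := hLfg
  have hSsub : (↑S : Set R2) ⊆ (Lam a : Set R2) := by
    intro s hs
    have : s ∈ L := hS ▸ Submodule.subset_span hs
    exact this
  constructor
  · exact ⟨S, hSsub, fun x hx => by
      have : x ∈ L := hx
      rwa [← hS] at this⟩
  · refine ⟨S ∪ {Q2 a 1, Q2 a 2}, le_antisymm ?_ ?_⟩
    · apply Algebra.adjoin_le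
      intro f hf
      simp only [Finset.coe_union, Set.mem_union, Finset.coe_insert, Finset.coe_singleton,
        Set.mem_insert_iff, Set.mem_singleton_iff] at hf
      rcases hf with hf | rfl | rfl
      · exact hSsub hf
      · exact hQmem 1 le_rfl
      · exact hQmem 2 (by norm_num)
    · intro x hx
      have hx' : x ∈ Submodule.span (Bsub a) (↑S : Set R2) := by
        have : x ∈ L := hx
        rwa [← hS] at this
      have hBle' : Bsub a ≤ Algebra.adjoin ℂ (↑(S ∪ {Q2 a 1, Q2 a 2}) : Set R2) := by
        apply Algebra.adjoin_le
        rintro f hf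
        rcases hf with rfl | hf
        · exact Algebra.subset_adjoin (by simp)
        · rcases hf with rfl
          exact Algebra.subset_adjoin (by simp)
      clear hx
      induction hx' using Submodule.span_induction with
      | mem s hs => exact Algebra.subset_adjoin (by simp [Finset.mem_coe.1 hs])
      | zero => exact zero_mem _
      | add u v _ _ hu hv => exact add_mem hu hv
      | smul b u _ hu =>
        rw [smul_def']
        exact mul_mem (hBle' b.2) hu
end
end

section
/- Let a = (a_1, a_2, ...) be a sequence of nonzero complex numbers with a_2 ≠ −a_1^2 and (a_2, a_3) ≠ (a_1^2, a_1^3). Then the C[Q_1, Q_2]-submodule M of Λ_a generated by 1 and Q_3 is free of rank 2 with basis {1, Q_3}; in particular its Hilbert series (with the grading by polynomial degree) is (1+u^3)/((1−u)(1−u^2)). -/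
open MvPolynomial

noncomputable section

/-- The degree-`n` homogeneous component of a graded subspace of `ℂ[y,z]`. -/
def comp2 (M : Submodule ℂ R2) (n : ℕ) : Submodule ℂ R2 :=
  M ⊓ homogeneousSubmodule (Fin 2) ℂ n

/-- The Hilbert series of a graded subspace of `ℂ[y,z]`, as a power series over `ℚ`. -/
def hilb2 (M : Submodule ℂ R2) : PowerSeries ℚ :=
  PowerSeries.mk fun n => (Module.finrank ℂ (comp2 M n) : ℚ)

lemma eval_aeval' (x : Fin 2 → ℂ) (g : Fin 2 → R2) (F : MvPolynomial (Fin 2) ℂ) :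
    eval x (aeval g F) = eval (fun i => eval x (g i)) F := by
  induction F using MvPolynomial.induction_on with
  | C c => simp
  | add p q hp hq => rw [map_add, map_add, hp, hq, ← map_add]
  | mul_X p i hp => rw [map_mul, aeval_X, eval_mul, eval_mul, eval_X, hp]

lemma eval_Q2 (a : ℕ → ℂ) (i : ℕ) (y z : ℂ) :
    eval ![y, z] (Q2 a i) = a i * y ^ i + z ^ i := by
  simp [Q2]

lemma eval_pt (a : ℕ → ℂ) {u v y : ℂ}
    (hy : (a 1 ^ 2 + a 2) * y ^ 2 - 2 * a 1 * u * y + (u ^ 2 - v) = 0)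
    (F : MvPolynomial (Fin 2) ℂ) :
    eval ![y, u - a 1 * y] (aeval ![Q2 a 1, Q2 a 2] F) = eval ![u, v] F := by
  rw [eval_aeval']
  have hfun : (fun i => eval ![y, u - a 1 * y] (![Q2 a 1, Q2 a 2] i)) = ![u, v] := by
    funext i
    fin_cases i
    · show eval ![y, u - a 1 * y] (Q2 a 1) = u
      rw [eval_Q2]; ring
    · show eval ![y, u - a 1 * y] (Q2 a 2) = v
      rw [eval_Q2]; linear_combination hy
  rw [hfun]

lemma key (a : ℕ → ℂ) (ha1 : a 1 ≠ 0) (hc : a 1 ^ 2 + a 2 ≠ 0)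
    (h3 : a 3 = a 1 ^ 3 → a 2 ≠ a 1 ^ 2)
    (F G : MvPolynomial (Fin 2) ℂ)
    (h : aeval ![Q2 a 1, Q2 a 2] F + aeval ![Q2 a 1, Q2 a 2] G * Q2 a 3 = 0) :
    F = 0 ∧ G = 0 := by
  set c : ℂ := a 1 ^ 2 + a 2 with hcdef
  set DP : MvPolynomial (Fin 2) ℂ := C (-(a 2)) * X 0 ^ 2 + C c * X 1 with hDP
  set BP : MvPolynomial (Fin 2) ℂ :=
    C (a 3 - a 1 ^ 3) * (C c * X 1 - C (a 2) * X 0 ^ 2) +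
      C (3 * a 1 * (a 1 * a 3 - a 2 ^ 2)) * X 0 ^ 2 with hBP
  have evDP : ∀ u v : ℂ, eval ![u, v] DP = -(a 2) * u ^ 2 + c * v := by
    intro u v; simp [hDP]
  have evBP : ∀ u v : ℂ, eval ![u, v] BP =
      (a 3 - a 1 ^ 3) * (c * v - a 2 * u ^ 2) + 3 * a 1 * (a 1 * a 3 - a 2 ^ 2) * u ^ 2 := by
    intro u v; simp [hBP]
  -- a general root construction
  have root : ∀ u v d : ℂ, d ^ 2 = -(a 2) * u ^ 2 + c * v → ∀ s : ℂ, s = 1 ∨ s = -1 →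
      c * ((a 1 * u + s * d) / c) ^ 2 - 2 * a 1 * u * ((a 1 * u + s * d) / c)
        + (u ^ 2 - v) = 0 := by
    intro u v d hd s hs
    have hs2 : s ^ 2 = 1 := by rcases hs with rfl | rfl <;> ring
    have hcy : c * ((a 1 * u + s * d) / c) = a 1 * u + s * d := by field_simp
    have h0 : c * (c * ((a 1 * u + s * d) / c) ^ 2 - 2 * a 1 * u * ((a 1 * u + s * d) / c)
        + (u ^ 2 - v)) = 0 := by
      linear_combination (c * ((a 1 * u + s * d) / c) + (a 1 * u + s * d) - 2 * a 1 * u) * hcy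
        + s ^ 2 * hd + ((a 1 ^ 2 + a 2) * v - a 2 * u ^ 2) * hs2
    exact (mul_eq_zero.mp h0).resolve_left hc
  have claim1 : ∀ u v : ℂ, eval ![u, v] DP ≠ 0 → eval ![u, v] BP ≠ 0 →
      eval ![u, v] F = 0 ∧ eval ![u, v] G = 0 := by
    intro u v hD hB
    obtain ⟨d, hd⟩ := IsAlgClosed.exists_pow_nat_eq (k := ℂ) (-(a 2) * u ^ 2 + c * v)
      (n := 2) (by norm_num)
    have hdne : d ≠ 0 := by
      intro h0
      rw [h0] at hd
      exact hD (by rw [evDP, ← hd]; ring)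
    set y1 : ℂ := (a 1 * u + d) / c with hy1def
    set y2 : ℂ := (a 1 * u + (-1) * d) / c with hy2def
    have hy1 := root u v d hd 1 (Or.inl rfl)
    have hy2 := root u v d hd (-1) (Or.inr rfl)
    rw [show a 1 * u + 1 * d = a 1 * u + d by ring] at hy1
    rw [← hy1def] at hy1
    rw [← hy2def] at hy2
    have e1 := congrArg (eval ![y1, u - a 1 * y1]) h
    have e2 := congrArg (eval ![y2, u - a 1 * y2]) h
    rw [map_add, map_mul, eval_pt a hy1, eval_pt a hy1, eval_Q2, map_zero] at e1
    rw [map_add, map_mul, eval_pt a hy2, eval_pt a hy2, eval_Q2, map_zero] at e2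
    have hcy1 : c * y1 = a 1 * u + d := by rw [hy1def]; field_simp
    have hcy2 : c * y2 = a 1 * u - d := by rw [hy2def]; field_simp; ring
    have hq3 : c ^ 3 * ((a 3 * y1 ^ 3 + (u - a 1 * y1) ^ 3) -
        (a 3 * y2 ^ 3 + (u - a 1 * y2) ^ 3)) = 2 * d * eval ![u, v] BP := by
      rw [evBP]
      linear_combination
        (a 3 * ((c * y1) ^ 2 + (c * y1) * (a 1 * u + d) + (a 1 * u + d) ^ 2)
          - a 1 * ((c * u - a 1 * (c * y1)) ^ 2
            + (c * u - a 1 * (c * y1)) * (c * u - a 1 * (a 1 * u + d))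
            + (c * u - a 1 * (a 1 * u + d)) ^ 2)) * hcy1
        - (a 3 * ((c * y2) ^ 2 + (c * y2) * (a 1 * u - d) + (a 1 * u - d) ^ 2)
          - a 1 * ((c * u - a 1 * (c * y2)) ^ 2
            + (c * u - a 1 * (c * y2)) * (c * u - a 1 * (a 1 * u - d))
            + (c * u - a 1 * (a 1 * u - d)) ^ 2)) * hcy2
        + 2 * d * (a 3 - a 1 ^ 3) * hd
    have hq3ne : (a 3 * y1 ^ 3 + (u - a 1 * y1) ^ 3) -
        (a 3 * y2 ^ 3 + (u - a 1 * y2) ^ 3) ≠ 0 := by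
      intro h0
      rw [h0, mul_zero] at hq3
      have h2d : 2 * d * eval ![u, v] BP ≠ 0 :=
        mul_ne_zero (mul_ne_zero two_ne_zero hdne) hB
      exact h2d hq3.symm
    have hG : eval ![u, v] G = 0 := by
      have hz : eval ![u, v] G * ((a 3 * y1 ^ 3 + (u - a 1 * y1) ^ 3) -
          (a 3 * y2 ^ 3 + (u - a 1 * y2) ^ 3)) = 0 := by linear_combination e1 - e2
      exact (mul_eq_zero.mp hz).resolve_right hq3ne
    refine ⟨?_, hG⟩
    rw [hG, zero_mul, add_zero] at e1
    exact e1
  have hvec : ∀ x : Fin 2 → ℂ, ![x 0, x 1] = x := by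
    intro x; funext i; fin_cases i <;> rfl
  have hDPne : DP ≠ 0 := by
    intro h0
    have hev := congrArg (eval ![0, 1]) h0
    rw [evDP, map_zero] at hev
    exact hc (by linear_combination hev)
  have hBPne : BP ≠ 0 := by
    by_cases h33 : a 3 = a 1 ^ 3
    · intro h0
      have hev := congrArg (eval ![1, 0]) h0
      rw [evBP, map_zero, h33] at hev
      have hfac : (3 * a 1) * ((a 1 ^ 2 - a 2) * (a 1 ^ 2 + a 2)) = 0 := by
        linear_combination hev
      rcases mul_eq_zero.mp hfac with h' | h'
      · rcases mul_eq_zero.mp h' with h'' | h''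
        · norm_num at h''
        · exact ha1 h''
      · rcases mul_eq_zero.mp h' with h'' | h''
        · exact (h3 h33) (by linear_combination -h'')
        · exact hc h''
    · intro h0
      have hev := congrArg (eval ![0, 1]) h0
      rw [evBP, map_zero] at hev
      have hfac : (a 3 - a 1 ^ 3) * c = 0 := by linear_combination hev
      rcases mul_eq_zero.mp hfac with h' | h'
      · exact h33 (by linear_combination h')
      · exact hc h'
  have hG0 : G = 0 := by
    have hz : ∀ x : Fin 2 → ℂ, eval x (G * (DP * BP)) = eval x 0 := by
      intro x
      rw [map_zero, map_mul, map_mul]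
      rw [← hvec x]
      by_cases hD : eval ![x 0, x 1] DP = 0
      · rw [hD]; ring
      · by_cases hB : eval ![x 0, x 1] BP = 0
        · rw [hB]; ring
        · rw [(claim1 (x 0) (x 1) hD hB).2]; ring
    have hzero := MvPolynomial.funext hz
    rcases mul_eq_zero.mp hzero with h' | h'
    · exact h'
    · rcases mul_eq_zero.mp h' with h'' | h''
      · exact absurd h'' hDPne
      · exact absurd h'' hBPne
  refine ⟨?_, hG0⟩
  rw [hG0, map_zero, zero_mul, add_zero] at h
  apply MvPolynomial.funext
  intro x
  rw [map_zero, ← hvec x]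
  obtain ⟨d, hd⟩ := IsAlgClosed.exists_pow_nat_eq (k := ℂ) (-(a 2) * (x 0) ^ 2 + c * (x 1))
    (n := 2) (by norm_num)
  have hy1 := root (x 0) (x 1) d hd 1 (Or.inl rfl)
  have hev := congrArg (eval ![(a 1 * (x 0) + 1 * d) / c,
    x 0 - a 1 * ((a 1 * (x 0) + 1 * d) / c)]) h
  rw [eval_pt a hy1, map_zero] at hev
  exact hev

lemma Bsub_eq_range (a : ℕ → ℂ) :
    Bsub a = (aeval (R := ℂ) ![Q2 a 1, Q2 a 2]).range := by
  rw [Bsub, ← Algebra.adjoin_range_eq_range_aeval]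
  congr 1
  rw [Set.pair_comm]
  simp [Matrix.range_cons, Matrix.range_empty]

lemma mem_Bsub {a : ℕ → ℂ} {x : R2} (hx : x ∈ Bsub a) :
    ∃ F : MvPolynomial (Fin 2) ℂ, aeval ![Q2 a 1, Q2 a 2] F = x := by
  rw [Bsub_eq_range] at hx
  exact hx

lemma part1 (a : ℕ → ℂ) (ha1 : a 1 ≠ 0) (hc : a 1 ^ 2 + a 2 ≠ 0)
    (h3 : a 3 = a 1 ^ 3 → a 2 ≠ a 1 ^ 2) :
    LinearIndependent ↥(Bsub a) ![(1 : R2), Q2 a 3] := by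
  rw [LinearIndependent.pair_iff]
  intro s t hst
  obtain ⟨F, hF⟩ := mem_Bsub s.2
  obtain ⟨G, hG⟩ := mem_Bsub t.2
  have h0 : aeval ![Q2 a 1, Q2 a 2] F + aeval ![Q2 a 1, Q2 a 2] G * Q2 a 3 = 0 := by
    rw [hF, hG]
    have := hst
    rwa [Subalgebra.smul_def, Subalgebra.smul_def, smul_eq_mul, smul_eq_mul, mul_one] at this
  obtain ⟨hF0, hG0⟩ := key a ha1 hc h3 F G h0
  constructor
  · apply Subtype.ext
    rw [← hF, hF0, map_zero]; rfl
  · apply Subtype.ext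
    rw [← hG, hG0, map_zero]; rfl

def eaux (n : ℕ) : ℕ := if 3 ≤ n then (n - 3) / 2 + 1 else 0

def bfun (a : ℕ → ℂ) (n : ℕ) : Fin (n / 2 + 1) ⊕ Fin (eaux n) → R2 :=
  Sum.elim (fun j => Q2 a 1 ^ (n - 2 * (j : ℕ)) * Q2 a 2 ^ (j : ℕ))
    (fun j => Q2 a 3 * (Q2 a 1 ^ (n - 3 - 2 * (j : ℕ)) * Q2 a 2 ^ (j : ℕ)))

lemma Q2_hom (a : ℕ → ℂ) (i : ℕ) : (Q2 a i).IsHomogeneous i := by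
  exact ((isHomogeneous_X_pow 0 i).C_mul _).add (isHomogeneous_X_pow 1 i)

lemma bprod_hom (a : ℕ → ℂ) (p q : ℕ) :
    (Q2 a 1 ^ p * Q2 a 2 ^ q).IsHomogeneous (p + 2 * q) := by
  have := ((Q2_hom a 1).pow p).mul ((Q2_hom a 2).pow q)
  rwa [one_mul] at this

lemma msum_inj {p p' q q' : ℕ}
    (h : Finsupp.single (0 : Fin 2) p + Finsupp.single 1 q =
      Finsupp.single 0 p' + Finsupp.single 1 q') : q = q' := by
  have := DFunLike.congr_fun h 1
  simpa [Finsupp.single_apply] using this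

lemma coeff_extract {k : ℕ} (f : Fin k → ℕ) (g : Fin k → ℂ)
    (h : (∑ j : Fin k, C (g j) * (X (0 : Fin 2) ^ (f j) * X 1 ^ (j : ℕ))) = 0) :
    ∀ j, g j = 0 := by
  have hterm : ∀ j : Fin k, C (g j) * (X (0 : Fin 2) ^ (f j) * X 1 ^ (j : ℕ)) =
      monomial (Finsupp.single 0 (f j) + Finsupp.single 1 (j : ℕ)) (g j) := by
    intro j
    rw [X_pow_eq_monomial, X_pow_eq_monomial, monomial_mul, one_mul, C_mul_monomial, mul_one]
  intro j0
  have hco := congrArg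
    (coeff (Finsupp.single (0 : Fin 2) (f j0) + Finsupp.single 1 (j0 : ℕ))) h
  rw [coeff_zero, coeff_sum, Finset.sum_eq_single j0] at hco
  · rwa [hterm, coeff_monomial, if_pos rfl] at hco
  · intro j _ hne
    rw [hterm, coeff_monomial, if_neg]
    intro heq
    exact hne (Fin.ext (msum_inj heq))
  · intro habs
    exact absurd (Finset.mem_univ j0) habs

lemma bfun_li (a : ℕ → ℂ) (ha1 : a 1 ≠ 0) (hc : a 1 ^ 2 + a 2 ≠ 0)
    (h3 : a 3 = a 1 ^ 3 → a 2 ≠ a 1 ^ 2) (n : ℕ) :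
    LinearIndependent ℂ (bfun a n) := by
  rw [Fintype.linearIndependent_iff]
  intro g hg
  rw [Fintype.sum_sum_type] at hg
  set F : MvPolynomial (Fin 2) ℂ := ∑ j : Fin (n / 2 + 1),
    C (g (Sum.inl j)) * (X 0 ^ (n - 2 * (j : ℕ)) * X 1 ^ (j : ℕ)) with hFdef
  set G : MvPolynomial (Fin 2) ℂ := ∑ j : Fin (eaux n),
    C (g (Sum.inr j)) * (X 0 ^ (n - 3 - 2 * (j : ℕ)) * X 1 ^ (j : ℕ)) with hGdef
  have hF' : aeval ![Q2 a 1, Q2 a 2] F =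
      ∑ j : Fin (n / 2 + 1), g (Sum.inl j) • bfun a n (Sum.inl j) := by
    rw [hFdef, map_sum]
    refine Finset.sum_congr rfl fun j _ => ?_
    simp [bfun, smul_eq_C_mul]
  have hG' : aeval ![Q2 a 1, Q2 a 2] G * Q2 a 3 =
      ∑ j : Fin (eaux n), g (Sum.inr j) • bfun a n (Sum.inr j) := by
    rw [hGdef, map_sum, Finset.sum_mul]
    refine Finset.sum_congr rfl fun j _ => ?_
    simp [bfun, smul_eq_C_mul]
    ring
  have h0 : aeval ![Q2 a 1, Q2 a 2] F + aeval ![Q2 a 1, Q2 a 2] G * Q2 a 3 = 0 := by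
    rw [hF', hG', hg]
  obtain ⟨hF0, hG0⟩ := key a ha1 hc h3 F G h0
  intro i
  cases i with
  | inl j => exact coeff_extract _ _ hF0 j
  | inr j => exact coeff_extract _ _ hG0 j

def Msub (a : ℕ → ℂ) : Submodule ℂ R2 :=
  Submodule.restrictScalars ℂ (Submodule.span (Bsub a) {(1 : R2), Q2 a 3})

lemma prod_mem_Bsub (a : ℕ → ℂ) (p q : ℕ) : Q2 a 1 ^ p * Q2 a 2 ^ q ∈ Bsub a :=
  mul_mem (pow_mem (Q1_mem a) p) (pow_mem (Q2_mem a) q)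

lemma smul_one_mem (a : ℕ → ℂ) {x : R2} (hx : x ∈ Bsub a) : x ∈ Msub a := by
  rw [Msub, Submodule.restrictScalars_mem, Submodule.mem_span_pair]
  exact ⟨⟨x, hx⟩, 0, by rw [Subalgebra.smul_def, zero_smul, add_zero, smul_eq_mul, mul_one]⟩

lemma smul_Q3_mem (a : ℕ → ℂ) {x : R2} (hx : x ∈ Bsub a) : Q2 a 3 * x ∈ Msub a := by
  rw [Msub, Submodule.restrictScalars_mem, Submodule.mem_span_pair]
  refine ⟨0, ⟨x, hx⟩, ?_⟩
  rw [Subalgebra.smul_def, Subalgebra.smul_def, smul_eq_mul, smul_eq_mul]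
  simp [mul_comm]

lemma bfun_mem (a : ℕ → ℂ) (n : ℕ) (i : Fin (n / 2 + 1) ⊕ Fin (eaux n)) :
    bfun a n i ∈ comp2 (Msub a) n := by
  cases i with
  | inl j =>
    refine ⟨smul_one_mem a (prod_mem_Bsub a _ _), ?_⟩
    rw [SetLike.mem_coe, mem_homogeneousSubmodule]
    have h2j : 2 * (j : ℕ) ≤ n := by have := j.2; omega
    have := bprod_hom a (n - 2 * (j : ℕ)) (j : ℕ)
    rwa [show n - 2 * (j : ℕ) + 2 * (j : ℕ) = n by omega] at this
  | inr j =>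
    have hjv : (j : ℕ) < eaux n := j.2
    unfold eaux at hjv
    split_ifs at hjv with h3n
    · refine ⟨smul_Q3_mem a (prod_mem_Bsub a _ _), ?_⟩
      rw [SetLike.mem_coe, mem_homogeneousSubmodule]
      have := (Q2_hom a 3).mul (bprod_hom a (n - 3 - 2 * (j : ℕ)) (j : ℕ))
      rwa [show 3 + (n - 3 - 2 * (j : ℕ) + 2 * (j : ℕ)) = n by omega] at this
    · omega

lemma aeval_as_sum (a : ℕ → ℂ) (F : MvPolynomial (Fin 2) ℂ) :
    aeval ![Q2 a 1, Q2 a 2] F =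
      ∑ d ∈ F.support, C (F.coeff d) * (Q2 a 1 ^ (d 0) * Q2 a 2 ^ (d 1)) := by
  conv_lhs => rw [F.as_sum]
  rw [map_sum]
  refine Finset.sum_congr rfl fun d _ => ?_
  rw [aeval_monomial, Finsupp.prod_pow]
  simp [Fin.prod_univ_two, algebraMap_eq]

lemma comp2_le (a : ℕ → ℂ) (n : ℕ) :
    comp2 (Msub a) n ≤ Submodule.span ℂ (Set.range (bfun a n)) := by
  rintro x ⟨hxM, hxh⟩
  rw [SetLike.mem_coe, mem_homogeneousSubmodule] at hxh
  rw [SetLike.mem_coe, Msub, Submodule.restrictScalars_mem, Submodule.mem_span_pair] at hxM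
  obtain ⟨s, t, hst⟩ := hxM
  obtain ⟨F, hF⟩ := mem_Bsub s.2
  obtain ⟨G, hG⟩ := mem_Bsub t.2
  rw [Subalgebra.smul_def, Subalgebra.smul_def, smul_eq_mul, smul_eq_mul, mul_one,
    ← hF, ← hG, aeval_as_sum, aeval_as_sum] at hst
  have hx2 : x =
      (∑ d ∈ F.support, if n = d 0 + 2 * d 1 then
        C (F.coeff d) * (Q2 a 1 ^ (d 0) * Q2 a 2 ^ (d 1)) else 0) +
      ∑ d ∈ G.support, if n = d 0 + 2 * d 1 + 3 then
        C (G.coeff d) * (Q2 a 1 ^ (d 0) * Q2 a 2 ^ (d 1)) * Q2 a 3 else 0 := by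
    calc x = homogeneousComponent n x := by
          rw [homogeneousComponent_of_mem ((mem_homogeneousSubmodule n x).2 hxh), if_pos rfl]
      _ = _ := by
          conv_lhs => rw [← hst]
          rw [map_add, Finset.sum_mul, map_sum, map_sum]
          congr 1
          · refine Finset.sum_congr rfl fun d _ => ?_
            rw [homogeneousComponent_of_mem
              ((mem_homogeneousSubmodule _ _).2 ((bprod_hom a (d 0) (d 1)).C_mul _))]
          · refine Finset.sum_congr rfl fun d _ => ?_
            rw [homogeneousComponent_of_mem ((mem_homogeneousSubmodule _ _).2
              (((bprod_hom a (d 0) (d 1)).C_mul _).mul (Q2_hom a 3)))]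
  rw [hx2]
  apply add_mem
  · refine Submodule.sum_mem _ fun d _ => ?_
    split_ifs with hdeg
    · have hj : (d 1 : ℕ) < n / 2 + 1 := by omega
      have heq : C (F.coeff d) * (Q2 a 1 ^ (d 0) * Q2 a 2 ^ (d 1)) =
          (F.coeff d) • bfun a n (Sum.inl ⟨d 1, hj⟩) := by
        rw [smul_eq_C_mul]
        show _ = C (F.coeff d) * (Q2 a 1 ^ (n - 2 * (d 1)) * Q2 a 2 ^ (d 1))
        rw [show n - 2 * (d 1) = d 0 by omega]
      rw [heq]
      exact Submodule.smul_mem _ _ (Submodule.subset_span ⟨Sum.inl ⟨d 1, hj⟩, rfl⟩)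
    · exact Submodule.zero_mem _
  · refine Submodule.sum_mem _ fun d _ => ?_
    split_ifs with hdeg
    · have hea : eaux n = (n - 3) / 2 + 1 := by
        unfold eaux
        rw [if_pos (by omega)]
      have hj : (d 1 : ℕ) < eaux n := by rw [hea]; omega
      have heq : C (G.coeff d) * (Q2 a 1 ^ (d 0) * Q2 a 2 ^ (d 1)) * Q2 a 3 =
          (G.coeff d) • bfun a n (Sum.inr ⟨d 1, hj⟩) := by
        rw [smul_eq_C_mul]
        show _ = C (G.coeff d) * (Q2 a 3 * (Q2 a 1 ^ (n - 3 - 2 * (d 1)) * Q2 a 2 ^ (d 1)))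
        rw [show n - 3 - 2 * (d 1) = d 0 by omega]
        ring
      rw [heq]
      exact Submodule.smul_mem _ _ (Submodule.subset_span ⟨Sum.inr ⟨d 1, hj⟩, rfl⟩)
    · exact Submodule.zero_mem _

lemma comp2_eq (a : ℕ → ℂ) (n : ℕ) :
    comp2 (Msub a) n = Submodule.span ℂ (Set.range (bfun a n)) := by
  refine le_antisymm (comp2_le a n) ?_
  rw [Submodule.span_le]
  rintro x ⟨i, rfl⟩
  exact bfun_mem a n i

lemma series_id :
    (PowerSeries.mk fun n => ((n / 2 + 1 + eaux n : ℕ) : ℚ)) *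
      ((1 - PowerSeries.X) * (1 - PowerSeries.X ^ 2)) = 1 + PowerSeries.X ^ 3 := by
  have key4 : ∀ m : ℕ, ((m + 6) / 2 + 1 + eaux (m + 6)) + ((m + 3) / 2 + 1 + eaux (m + 3)) =
      ((m + 5) / 2 + 1 + eaux (m + 5)) + ((m + 4) / 2 + 1 + eaux (m + 4)) := by
    intro m
    simp only [eaux]
    split_ifs <;> omega
  have hg : ((1 - PowerSeries.X) * (1 - PowerSeries.X ^ 2) : PowerSeries ℚ) =
      1 - PowerSeries.X ^ 1 - PowerSeries.X ^ 2 + PowerSeries.X ^ 3 := by ring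
  rw [hg]
  ext n
  rw [mul_add, mul_sub, mul_sub, mul_one]
  simp only [map_add, map_sub, PowerSeries.coeff_mul_X_pow', PowerSeries.coeff_mk,
    PowerSeries.coeff_one, PowerSeries.coeff_X_pow]
  rcases n with _ | _ | _ | _ | _ | _ | n
  · norm_num [eaux]
  · norm_num [eaux]
  · norm_num [eaux]
  · norm_num [eaux]
  · norm_num [eaux]
  · norm_num [eaux]
  · have h := key4 n
    have h' : (((n + 6) / 2 + 1 + eaux (n + 6) : ℕ) : ℚ) +
        (((n + 3) / 2 + 1 + eaux (n + 3) : ℕ) : ℚ) =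
        (((n + 5) / 2 + 1 + eaux (n + 5) : ℕ) : ℚ) +
        (((n + 4) / 2 + 1 + eaux (n + 4) : ℕ) : ℚ) := by exact_mod_cast congrArg (Nat.cast (R := ℚ)) h
    simp only [show n + 1 + 1 + 1 + 1 + 1 + 1 = n + 6 from rfl,
      show n + 6 - 1 = n + 5 from rfl, show n + 6 - 2 = n + 4 from rfl,
      show n + 6 - 3 = n + 3 from rfl]
    push_cast at h'
    split_ifs <;> first | contradiction | (exfalso; omega) | (push_cast; linarith [h'])

lemma finrank_comp2 (a : ℕ → ℂ) (ha1 : a 1 ≠ 0) (hc : a 1 ^ 2 + a 2 ≠ 0)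
    (h3 : a 3 = a 1 ^ 3 → a 2 ≠ a 1 ^ 2) (n : ℕ) :
    Module.finrank ℂ (comp2 (Msub a) n) = n / 2 + 1 + eaux n := by
  rw [comp2_eq a n, finrank_span_eq_card (bfun_li a ha1 hc h3 n)]
  simp

/-- If `a_2 ≠ -a_1^2` and `(a_2, a_3) ≠ (a_1^2, a_1^3)`, then the `ℂ[Q_1,Q_2]`-submodule `M`
of `Λ_a` generated by `1` and `Q_3` is free of rank `2` with basis `{1, Q_3}`
(i.e. `1, Q_3` are linearly independent over `ℂ[Q_1,Q_2]`); in particular its Hilbert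
series is `(1+u^3)/((1-u)(1-u^2))`. -/
theorem submodule_one_Q3_free (a : ℕ → ℂ) (ha : ∀ i : ℕ, 1 ≤ i → a i ≠ 0)
    (h2 : a 2 ≠ -(a 1) ^ 2) (h3 : (a 2, a 3) ≠ ((a 1) ^ 2, (a 1) ^ 3)) :
    LinearIndependent ↥(Bsub a) ![(1 : R2), Q2 a 3] ∧
    hilb2 (Submodule.restrictScalars ℂ
        (Submodule.span (Bsub a) {(1 : R2), Q2 a 3})) *
        ((1 - PowerSeries.X) * (1 - PowerSeries.X ^ 2)) =
      1 + PowerSeries.X ^ 3 := by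
  have ha1 : a 1 ≠ 0 := ha 1 le_rfl
  have hc : a 1 ^ 2 + a 2 ≠ 0 := fun h => h2 (by linear_combination h)
  have h3' : a 3 = a 1 ^ 3 → a 2 ≠ a 1 ^ 2 := by
    intro he hq
    exact h3 (by rw [hq, he])
  refine ⟨part1 a ha1 hc h3', ?_⟩
  have hh : hilb2 (Msub a) = PowerSeries.mk fun n => ((n / 2 + 1 + eaux n : ℕ) : ℚ) := by
    ext n
    rw [hilb2, PowerSeries.coeff_mk, PowerSeries.coeff_mk, finrank_comp2 a ha1 hc h3' n]
  rw [show Submodule.restrictScalars ℂ (Submodule.span (Bsub a) {(1 : R2), Q2 a 3})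
    = Msub a from rfl, hh]
  exact series_id
end
end

section
/- Let N ≥ 1 and let a_{ij} (i ≥ 1, 1 ≤ j ≤ N) be nonzero complex numbers. Set Q_i(x_1,...,x_N) := Σ_{j=1}^N a_{ij} x_j^i, and let A be the subalgebra of C[x_1,...,x_N] generated by all Q_i, i ≥ 1. Then A is finitely generated as a C-algebra if and only if the only point (x_1,...,x_N) ∈ C^N satisfying Q_i(x_1,...,x_N) = 0 for all i ≥ 1 is the origin. -/
open MvPolynomial

noncomputable section

namespace AuxGPS

variable {σ : Type*}

lemma degree_add' (u v : σ →₀ ℕ) : (u + v).degree = u.degree + v.degree := by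
  simp [Finsupp.degree_eq_weight_one, map_add]

lemma degree_single' (j : σ) (n : ℕ) : (Finsupp.single j n).degree = n := by
  rcases eq_or_ne n 0 with rfl | h
  · simp [Finsupp.degree]
  · exact Finsupp.degree_single j n

lemma homogeneousComponent_of_isHomogeneous {p : MvPolynomial σ ℂ} {n : ℕ}
    (hp : p.IsHomogeneous n) : homogeneousComponent n p = p := by
  ext m
  rw [coeff_homogeneousComponent]
  by_cases hm : m.degree = n
  · rw [if_pos hm]
  · rw [if_neg hm]
    exact (hp.coeff_eq_zero hm).symm

lemma homogeneousComponent_mul_right_le (g q : MvPolynomial σ ℂ) {i : ℕ}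
    (hq : q.IsHomogeneous i) {d : ℕ} (hi : i ≤ d) :
    homogeneousComponent d (g * q) = homogeneousComponent (d - i) g * q := by
  classical
  ext m
  rw [coeff_homogeneousComponent]
  rw [coeff_mul]
  by_cases hm : m.degree = d
  · rw [if_pos hm, coeff_mul]
    refine Finset.sum_congr rfl fun p hp => ?_
    rw [Finset.HasAntidiagonal.mem_antidiagonal] at hp
    by_cases hq0 : coeff p.2 q = 0
    · simp [hq0]
    · have hdeg2 : p.2.degree = i := by
        by_contra hne; exact hq0 (hq.coeff_eq_zero hne)
      have hda := degree_add' p.1 p.2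
      rw [hp, hm, hdeg2] at hda
      have h1 : p.1.degree = d - i := by omega
      rw [coeff_homogeneousComponent (d - i) g p.1, if_pos h1]
  · rw [if_neg hm, coeff_mul]
    symm
    refine Finset.sum_eq_zero fun p hp => ?_
    rw [Finset.HasAntidiagonal.mem_antidiagonal] at hp
    by_cases hq0 : coeff p.2 q = 0
    · simp [hq0]
    · have hdeg2 : p.2.degree = i := by
        by_contra hne; exact hq0 (hq.coeff_eq_zero hne)
      have h1 : p.1.degree ≠ d - i := by
        intro hE
        apply hm
        have hda := degree_add' p.1 p.2
        rw [hp, hE, hdeg2] at hda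
        omega
      rw [coeff_homogeneousComponent (d - i) g p.1, if_neg h1, zero_mul]

lemma homogeneousComponent_mul_right_gt (g q : MvPolynomial σ ℂ) {i : ℕ}
    (hq : q.IsHomogeneous i) {d : ℕ} (hi : ¬ i ≤ d) :
    homogeneousComponent d (g * q) = 0 := by
  classical
  ext m
  rw [coeff_homogeneousComponent, coeff_zero]
  by_cases hm : m.degree = d
  · rw [if_pos hm, coeff_mul]
    refine Finset.sum_eq_zero fun p hp => ?_
    rw [Finset.HasAntidiagonal.mem_antidiagonal] at hp
    by_cases hq0 : coeff p.2 q = 0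
    · simp [hq0]
    · exfalso
      have hdeg2 : p.2.degree = i := by
        by_contra hne; exact hq0 (hq.coeff_eq_zero hne)
      have hda := degree_add' p.1 p.2
      rw [hp, hm, hdeg2] at hda
      omega
  · rw [if_neg hm]

lemma exists_finset_subset_adjoin {A : Type*} [CommRing A] [Algebra ℂ A]
    {S : Set A} {x : A} (hx : x ∈ Algebra.adjoin ℂ S) :
    ∃ t : Finset A, ↑t ⊆ S ∧ x ∈ Algebra.adjoin ℂ (t : Set A) := by
  classical
  induction hx using Algebra.adjoin_induction with
  | mem y hy => exact ⟨{y}, by simpa using hy, Algebra.subset_adjoin (by simp)⟩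
  | algebraMap r => exact ⟨∅, by simp, Subalgebra.algebraMap_mem _ r⟩
  | add y z hy hz ihy ihz =>
      obtain ⟨t1, h1, m1⟩ := ihy
      obtain ⟨t2, h2, m2⟩ := ihz
      refine ⟨t1 ∪ t2, ?_, ?_⟩
      · rw [Finset.coe_union]; exact Set.union_subset h1 h2
      · exact Subalgebra.add_mem _
          (Algebra.adjoin_mono (by rw [Finset.coe_union]; exact Set.subset_union_left) m1)
          (Algebra.adjoin_mono (by rw [Finset.coe_union]; exact Set.subset_union_right) m2)
  | mul y z hy hz ihy ihz =>
      obtain ⟨t1, h1, m1⟩ := ihy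
      obtain ⟨t2, h2, m2⟩ := ihz
      refine ⟨t1 ∪ t2, ?_, ?_⟩
      · rw [Finset.coe_union]; exact Set.union_subset h1 h2
      · exact Subalgebra.mul_mem _
          (Algebra.adjoin_mono (by rw [Finset.coe_union]; exact Set.subset_union_left) m1)
          (Algebra.adjoin_mono (by rw [Finset.coe_union]; exact Set.subset_union_right) m2)

lemma finset_adjoin_of_finset {A : Type*} [CommRing A] [Algebra ℂ A]
    {S : Set A} (s : Finset A) (hs : ∀ y ∈ s, y ∈ Algebra.adjoin ℂ S) :
    ∃ t : Finset A, ↑t ⊆ S ∧ ∀ y ∈ s, y ∈ Algebra.adjoin ℂ (t : Set A) := by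
  classical
  induction s using Finset.induction with
  | empty => exact ⟨∅, by simp, by simp⟩
  | @insert y s hys ih =>
      obtain ⟨t1, h1, m1⟩ := ih (fun z hz => hs z (by simp [hz]))
      obtain ⟨t2, h2, m2⟩ := exists_finset_subset_adjoin (hs y (by simp))
      refine ⟨t1 ∪ t2, ?_, ?_⟩
      · rw [Finset.coe_union]; exact Set.union_subset h1 h2
      · intro z hz
        rcases Finset.mem_insert.mp hz with rfl | hz
        · exact Algebra.adjoin_mono (by rw [Finset.coe_union]; exact Set.subset_union_right) m2
        · exact Algebra.adjoin_mono (by rw [Finset.coe_union]; exact Set.subset_union_left) (m1 z hz)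

lemma span_finset_of_finset {R M : Type*} [Semiring R] [AddCommMonoid M] [Module R M]
    (S : Set M) (s : Finset M) (hs : ∀ y ∈ s, y ∈ Submodule.span R S) :
    ∃ t : Finset M, ↑t ⊆ S ∧ ∀ y ∈ s, y ∈ Submodule.span R (t : Set M) := by
  classical
  induction s using Finset.induction with
  | empty => exact ⟨∅, by simp, by simp⟩
  | @insert y s hys ih =>
      obtain ⟨t1, h1, m1⟩ := ih (fun z hz => hs z (by simp [hz]))
      obtain ⟨t2, h2, m2⟩ := Submodule.mem_span_finite_of_mem_span (hs y (by simp))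
      refine ⟨t1 ∪ t2, ?_, ?_⟩
      · rw [Finset.coe_union]; exact Set.union_subset h1 h2
      · intro z hz
        rcases Finset.mem_insert.mp hz with rfl | hz
        · exact Submodule.span_mono (by rw [Finset.coe_union]; exact Set.subset_union_right) m2
        · exact Submodule.span_mono (by rw [Finset.coe_union]; exact Set.subset_union_left) (m1 z hz)

lemma ideal_span_finset {R : Type*} [CommRing R] [IsNoetherianRing R] (S : Set R) :
    ∃ t : Finset R, ↑t ⊆ S ∧ Ideal.span (t : Set R) = Ideal.span S := by
  obtain ⟨s, hs⟩ := IsNoetherian.noetherian (Ideal.span S)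
  obtain ⟨t, htS, ht⟩ := span_finset_of_finset S s
    (fun y hy => by rw [show Submodule.span R (S : Set R) = Ideal.span S from rfl, ← hs]; exact Submodule.subset_span hy)
  refine ⟨t, htS, le_antisymm (Ideal.span_mono htS) ?_⟩
  rw [← hs]
  exact Submodule.span_le.mpr (fun y hy => ht y hy)



theorem backward (N : ℕ) (a : ℕ → Fin N → ℂ)
    (hzero : ∀ x : Fin N → ℂ, (∀ i : ℕ, 1 ≤ i → ∑ j : Fin N, a i j * x j ^ i = 0) → x = 0) :
    (Algebra.adjoin ℂ {f : MvPolynomial (Fin N) ℂ |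
        ∃ i : ℕ, 1 ≤ i ∧ f = ∑ j : Fin N, C (a i j) * X j ^ i}).FG := by
  classical
  set S : Set (MvPolynomial (Fin N) ℂ) :=
    {f | ∃ i : ℕ, 1 ≤ i ∧ f = ∑ j : Fin N, C (a i j) * X j ^ i} with hSdef
  set B : Subalgebra ℂ (MvPolynomial (Fin N) ℂ) := Algebra.adjoin ℂ S with hBdef
  have hQhom : ∀ i : ℕ,
      (∑ j : Fin N, C (a i j) * X j ^ i : MvPolynomial (Fin N) ℂ).IsHomogeneous i := by
    intro i
    refine IsHomogeneous.sum _ _ _ (fun j _ => ?_)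
    simpa using (isHomogeneous_C (Fin N) (a i j)).mul ((isHomogeneous_X ℂ j).pow i)
  have hShom : ∀ f ∈ S, ∃ i : ℕ, 1 ≤ i ∧ f = (∑ j : Fin N, C (a i j) * X j ^ i) :=
    fun f hf => hf
  obtain ⟨T, hTS, hTspan⟩ := ideal_span_finset S
  choose idx hidx1 hidx2 using
    fun (f : MvPolynomial (Fin N) ℂ) (hf : f ∈ T) => hShom f (hTS hf)
  have hzl : MvPolynomial.zeroLocus ℂ (Ideal.span S) = {0} := by
    ext y
    simp only [MvPolynomial.mem_zeroLocus_iff, Set.mem_singleton_iff]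
    constructor
    · intro hy
      refine hzero y (fun i hi => ?_)
      have := hy _ (Ideal.subset_span (show _ ∈ S from ⟨i, hi, rfl⟩))
      simpa using this
    · rintro rfl p hp
      have hker : Ideal.span S ≤ RingHom.ker (eval (0 : Fin N → ℂ)) := by
        rw [Ideal.span_le]
        rintro f ⟨i, hi, rfl⟩
        have h0 : (0 : ℂ) ^ i = 0 := zero_pow (by omega)
        simp [RingHom.mem_ker, h0]
      exact hker hp
  have hXpow : ∀ j : Fin N, ∃ r : ℕ, 1 ≤ r ∧ X j ^ r ∈ Ideal.span S := by
    intro j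
    have hmem : (X j : MvPolynomial (Fin N) ℂ) ∈ (Ideal.span S).radical := by
      rw [← MvPolynomial.vanishingIdeal_zeroLocus_eq_radical (K := ℂ), hzl,
        MvPolynomial.mem_vanishingIdeal_iff]
      rintro x hx
      rw [Set.mem_singleton_iff] at hx
      subst hx
      simp
    obtain ⟨m, hm⟩ := hmem
    refine ⟨m + 1, by omega, ?_⟩
    have : (X j : MvPolynomial (Fin N) ℂ) ^ (m + 1) = X j * X j ^ m := by ring
    rw [this]
    exact Ideal.mul_mem_left _ _ hm
  choose r hr1 hrmem using hXpow
  set D : ℕ := ∑ j : Fin N, r j with hD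
  have hXrep : ∀ j : Fin N, ∃ h : MvPolynomial (Fin N) ℂ → MvPolynomial (Fin N) ℂ,
      ((X j ^ r j : MvPolynomial (Fin N) ℂ) = ∑ f ∈ T, h f * f) ∧
      (∀ f (hf : f ∈ T), idx f hf ≤ r j → (h f).IsHomogeneous (r j - idx f hf)) ∧
      (∀ f (hf : f ∈ T), ¬ idx f hf ≤ r j → h f = 0) := by
    intro j
    have hmem : (X j ^ r j : MvPolynomial (Fin N) ℂ) ∈
        Submodule.span (MvPolynomial (Fin N) ℂ) (T : Set (MvPolynomial (Fin N) ℂ)) := by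
      rw [show Submodule.span (MvPolynomial (Fin N) ℂ) (T : Set _)
            = Ideal.span (T : Set _) from rfl, hTspan]
      exact hrmem j
    obtain ⟨g, -, hg⟩ := Submodule.mem_span_finset.mp hmem
    refine ⟨fun f => if hf : f ∈ T then
        (if idx f hf ≤ r j then homogeneousComponent (r j - idx f hf) (g f) else 0) else 0,
      ?_, ?_, ?_⟩
    · have hXhom : (X j ^ r j : MvPolynomial (Fin N) ℂ).IsHomogeneous (r j) := by
        simpa using (isHomogeneous_X ℂ j).pow (r j)
      conv_lhs => rw [← homogeneousComponent_of_isHomogeneous hXhom, ← hg]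
      rw [map_sum]
      refine Finset.sum_congr rfl (fun f hf => ?_)
      rw [smul_eq_mul]
      have hfhom : f.IsHomogeneous (idx f hf) := by
        conv_lhs => rw [hidx2 f hf]
        exact hQhom _
      by_cases hle : idx f hf ≤ r j
      · beta_reduce
        rw [homogeneousComponent_mul_right_le (g f) f hfhom hle, dif_pos hf, if_pos hle]
      · beta_reduce
        rw [homogeneousComponent_mul_right_gt (g f) f hfhom hle, dif_pos hf, if_neg hle,
          zero_mul]
    · intro f hf hle
      beta_reduce
      rw [dif_pos hf, if_pos hle]
      exact homogeneousComponent_isHomogeneous _ _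
    · intro f hf hle
      beta_reduce
      rw [dif_pos hf, if_neg hle]
  choose hco hrep hhom hzeroco using hXrep
  set G : Set (MvPolynomial (Fin N) ℂ) :=
    (fun u => (monomial u (1:ℂ))) '' {u : Fin N →₀ ℕ | u.degree ≤ D} with hG
  have main : ∀ d : ℕ, ∀ p : MvPolynomial (Fin N) ℂ, p.IsHomogeneous d →
      p ∈ Submodule.span B G := by
    intro d
    induction d using Nat.strong_induction_on with
    | _ d IH =>
      intro p hp
      rw [← support_sum_monomial_coeff p]
      refine Submodule.sum_mem _ (fun u hu => ?_)
      have hud : u.degree = d := by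
        rw [Finsupp.degree_eq_weight_one]
        exact hp (mem_support_iff.mp hu)
      by_cases hd : d ≤ D
      · have heq : (monomial u (coeff u p)) = (coeff u p) • (monomial u (1:ℂ)) := by
          rw [smul_monomial, smul_eq_mul, mul_one]
        rw [heq]
        refine Submodule.smul_of_tower_mem _ _ (Submodule.subset_span ⟨u, ?_, rfl⟩)
        simp only [Set.mem_setOf_eq]
        omega
      · have hex : ∃ j, r j ≤ u j := by
          by_contra hcon
          push_neg at hcon
          have h1 : u.degree = ∑ j : Fin N, u j := by
            rw [Finsupp.degree]
            exact Finset.sum_subset (Finset.subset_univ _)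
              (fun j _ hj => Finsupp.notMem_support_iff.mp hj)
          have h2 : ∑ j : Fin N, u j ≤ ∑ j : Fin N, (r j - 1) :=
            Finset.sum_le_sum (fun j _ => by have := hcon j; omega)
          have h3 : ∑ j : Fin N, (r j - 1) ≤ ∑ j : Fin N, r j :=
            Finset.sum_le_sum (fun j _ => by omega)
          omega
        obtain ⟨j, hj⟩ := hex
        have hujd : u j ≤ u.degree := Finsupp.le_degree j u
        have hrd : r j ≤ d := by omega
        set u' := u - Finsupp.single j (r j) with hu'
        have hle : Finsupp.single j (r j) ≤ u := by
          rw [Finsupp.single_le_iff]; exact hj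
        have hsplit : u' + Finsupp.single j (r j) = u := tsub_add_cancel_of_le hle
        have hmono : (monomial u (coeff u p)) = (monomial u' (coeff u p)) * (X j ^ r j) := by
          rw [X_pow_eq_monomial, monomial_mul, mul_one, hsplit]
        rw [hmono, hrep j, Finset.mul_sum]
        refine Submodule.sum_mem _ (fun f hf => ?_)
        by_cases hif : idx f hf ≤ r j
        · have hfB : f ∈ B := Algebra.subset_adjoin (hTS hf)
          have hterm : (monomial u' (coeff u p)) * (hco j f * f)
              = (⟨f, hfB⟩ : B) • ((monomial u' (coeff u p)) * hco j f) := by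
            rw [Algebra.smul_def]
            have hval : algebraMap B (MvPolynomial (Fin N) ℂ) ⟨f, hfB⟩ = f := rfl
            rw [hval]
            ring
          rw [hterm]
          refine Submodule.smul_mem _ _ ?_
          have hdu' : u'.degree = d - r j := by
            have hh := degree_add' u' (Finsupp.single j (r j))
            rw [hsplit, degree_single'] at hh
            omega
          have hmh : ((monomial u' (coeff u p)) : MvPolynomial (Fin N) ℂ).IsHomogeneous (d - r j) :=
            isHomogeneous_monomial _ hdu'
          have hprod := hmh.mul (hhom j f hf hif)
          have heq2 : (d - r j) + (r j - idx f hf) = d - idx f hf := by omega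
          rw [heq2] at hprod
          have hlt : d - idx f hf < d := by have := hidx1 f hf; omega
          exact IH _ hlt _ hprod
        · rw [hzeroco j f hf hif, zero_mul, mul_zero]
          exact Submodule.zero_mem _
  have htop : ∀ p : MvPolynomial (Fin N) ℂ, p ∈ Submodule.span B G := by
    intro p
    rw [← sum_homogeneousComponent p]
    exact Submodule.sum_mem _ (fun i _ => main i _ (homogeneousComponent_isHomogeneous i p))
  have hGfin : G.Finite := (Finsupp.finite_of_degree_le D).image _
  have hmodfg : (⊤ : Submodule B (MvPolynomial (Fin N) ℂ)).FG := by
    refine ⟨hGfin.toFinset, ?_⟩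
    rw [Set.Finite.coe_toFinset]
    exact eq_top_iff.mpr (fun p _ => htop p)
  have hRtop : (⊤ : Subalgebra ℂ (MvPolynomial (Fin N) ℂ)).FG :=
    (inferInstance : Algebra.FiniteType ℂ (MvPolynomial (Fin N) ℂ)).1
  have hinj : Function.Injective (algebraMap B (MvPolynomial (Fin N) ℂ)) :=
    fun p q h => Subtype.ext h
  have hfg := fg_of_fg_of_fg ℂ B (MvPolynomial (Fin N) ℂ) hRtop hmodfg hinj
  exact (Subalgebra.fg_top B).mp hfg


set_option maxHeartbeats 1000000 in
theorem forward (N : ℕ) (a : ℕ → Fin N → ℂ)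
    (ha : ∀ i : ℕ, 1 ≤ i → ∀ j : Fin N, a i j ≠ 0)
    (hFG : (Algebra.adjoin ℂ {f : MvPolynomial (Fin N) ℂ |
        ∃ i : ℕ, 1 ≤ i ∧ f = ∑ j : Fin N, C (a i j) * X j ^ i}).FG)
    (x : Fin N → ℂ)
    (hx : ∀ i : ℕ, 1 ≤ i → ∑ j : Fin N, a i j * x j ^ i = 0) : x = 0 := by
  classical
  by_contra hx0
  obtain ⟨j₀, hj₀⟩ : ∃ j, x j ≠ 0 := by
    by_contra h; push_neg at h; exact hx0 (funext h)
  set S : Set (MvPolynomial (Fin N) ℂ) :=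
    {f | ∃ i : ℕ, 1 ≤ i ∧ f = ∑ j : Fin N, C (a i j) * X j ^ i} with hSdef
  obtain ⟨s, hs⟩ := hFG
  have hsmem : ∀ y ∈ s, y ∈ Algebra.adjoin ℂ S := by
    intro y hy
    rw [← hs]
    exact Algebra.subset_adjoin hy
  obtain ⟨t, htS, ht⟩ := finset_adjoin_of_finset s hsmem
  have hAle : Algebra.adjoin ℂ S ≤ Algebra.adjoin ℂ (↑t : Set (MvPolynomial (Fin N) ℂ)) := by
    rw [← hs]; exact Algebra.adjoin_le (fun y hy => ht y hy)
  choose idx hidx1 hidx2 using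
    fun (f : MvPolynomial (Fin N) ℂ) (hf : f ∈ t) => (htS hf : f ∈ S)
  set M : ℕ := t.attach.sup (fun f => idx f.1 f.2) + 1 with hM
  have hidxM : ∀ f (hf : f ∈ t), idx f hf < M := by
    intro f hf
    have : idx f hf ≤ t.attach.sup (fun f => idx f.1 f.2) :=
      Finset.le_sup (f := fun f : {y // y ∈ t} => idx f.1 f.2) (Finset.mem_attach t ⟨f, hf⟩)
    omega
  set n : ℕ := M + 1 with hn
  have hQn : (∑ j : Fin N, C (a n j) * X j ^ n : MvPolynomial (Fin N) ℂ) ∈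
      Algebra.adjoin ℂ (↑t : Set (MvPolynomial (Fin N) ℂ)) :=
    hAle (Algebra.subset_adjoin ⟨n, by omega, rfl⟩)
  -- the dual-number evaluation
  set v : Fin N → DualNumber (Polynomial ℂ) := fun j =>
    TrivSqZeroExt.inl (Polynomial.C (x j) * Polynomial.X) +
      (if j = j₀ then TrivSqZeroExt.inr 1 else 0) with hv
  have hv_fst : ∀ j, (v j).fst = Polynomial.C (x j) * Polynomial.X := by
    intro j
    rw [hv]
    by_cases h : j = j₀ <;>
      simp [h, TrivSqZeroExt.fst_add, TrivSqZeroExt.fst_inl, TrivSqZeroExt.fst_inr]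
  have hv_snd : ∀ j, (v j).snd = if j = j₀ then 1 else 0 := by
    intro j
    rw [hv]
    by_cases h : j = j₀ <;>
      simp [h, TrivSqZeroExt.snd_add, TrivSqZeroExt.snd_inl, TrivSqZeroExt.snd_inr]
  have hkey : ∀ i : ℕ, 1 ≤ i →
      (MvPolynomial.aeval v (∑ j : Fin N, C (a i j) * X j ^ i) : DualNumber (Polynomial ℂ)) =
      TrivSqZeroExt.inr (Polynomial.C ((i : ℂ) * a i j₀ * x j₀ ^ (i-1)) *
        Polynomial.X ^ (i-1)) := by
    intro i hi
    have h1 : (MvPolynomial.aeval v (∑ j : Fin N, C (a i j) * X j ^ i) : DualNumber (Polynomial ℂ))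
        = ∑ j : Fin N, algebraMap ℂ (DualNumber (Polynomial ℂ)) (a i j) * (v j) ^ i := by
      rw [map_sum]
      refine Finset.sum_congr rfl (fun j _ => ?_)
      rw [map_mul, map_pow, aeval_C, aeval_X]
    apply TrivSqZeroExt.ext
    · rw [h1, TrivSqZeroExt.fst_sum, TrivSqZeroExt.fst_inr]
      have hterm : ∀ j, (algebraMap ℂ (DualNumber (Polynomial ℂ)) (a i j) * (v j) ^ i).fst
          = Polynomial.C (a i j * x j ^ i) * Polynomial.X ^ i := by
        intro j
        rw [TrivSqZeroExt.fst_mul, TrivSqZeroExt.fst_pow, hv_fst,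
          TrivSqZeroExt.algebraMap_eq_inl', TrivSqZeroExt.fst_inl, Polynomial.algebraMap_eq,
          mul_pow, ← Polynomial.C_pow, ← mul_assoc, ← Polynomial.C_mul]
      rw [Finset.sum_congr rfl (fun j _ => hterm j), ← Finset.sum_mul, ← map_sum Polynomial.C,
        hx i hi, Polynomial.C_0, zero_mul]
    · rw [h1, TrivSqZeroExt.snd_sum, TrivSqZeroExt.snd_inr]
      have hterm : ∀ j, (algebraMap ℂ (DualNumber (Polynomial ℂ)) (a i j) * (v j) ^ i).snd
          = if j = j₀ then Polynomial.C ((i : ℂ) * a i j₀ * x j₀ ^ (i-1)) *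
              Polynomial.X ^ (i-1) else 0 := by
        intro j
        rw [TrivSqZeroExt.snd_mul, TrivSqZeroExt.algebraMap_eq_inl', TrivSqZeroExt.snd_inl,
          smul_zero, add_zero, TrivSqZeroExt.fst_inl, TrivSqZeroExt.snd_pow, hv_fst, hv_snd,
          Polynomial.algebraMap_eq]
        by_cases h : j = j₀
        · subst h
          rw [if_pos rfl, if_pos rfl, smul_eq_mul, smul_eq_mul, mul_one, nsmul_eq_mul,
            Nat.pred_eq_sub_one, Polynomial.C_mul, Polynomial.C_mul, Polynomial.C_pow,
            ← Polynomial.C_eq_natCast]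
          ring
        · rw [if_neg h, if_neg h]
          simp
      rw [Finset.sum_congr rfl (fun j _ => hterm j), Finset.sum_ite_eq' Finset.univ j₀,
        if_pos (Finset.mem_univ j₀)]
  -- invariant on the adjoin of t
  have inv : ∀ z ∈ Algebra.adjoin ℂ (↑t : Set (MvPolynomial (Fin N) ℂ)),
      (∃ c : ℂ, (MvPolynomial.aeval v z : DualNumber (Polynomial ℂ)).fst = Polynomial.C c) ∧
      (MvPolynomial.aeval v z : DualNumber (Polynomial ℂ)).snd ∈ Polynomial.degreeLT ℂ M := by
    have hCmul : ∀ (c : ℂ) (p : Polynomial ℂ), p ∈ Polynomial.degreeLT ℂ M →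
        Polynomial.C c * p ∈ Polynomial.degreeLT ℂ M := by
      intro c p hp
      rw [Polynomial.mem_degreeLT] at hp ⊢
      calc (Polynomial.C c * p).degree ≤ (Polynomial.C c).degree + p.degree :=
            Polynomial.degree_mul_le _ _
        _ ≤ 0 + p.degree := add_le_add_left Polynomial.degree_C_le _
        _ = p.degree := zero_add _
        _ < M := hp
    intro z hz
    induction hz using Algebra.adjoin_induction with
    | mem f hf =>
        have h2 := hidx2 f hf
        have h1 := hidx1 f hf
        constructor
        · refine ⟨0, ?_⟩
          rw [h2, hkey _ h1, TrivSqZeroExt.fst_inr, Polynomial.C_0]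
        · rw [h2, hkey _ h1, TrivSqZeroExt.snd_inr, Polynomial.mem_degreeLT]
          calc (Polynomial.C ((idx f hf : ℂ) * a (idx f hf) j₀ * x j₀ ^ (idx f hf - 1)) *
                Polynomial.X ^ (idx f hf - 1)).degree
              ≤ _ + _ := Polynomial.degree_mul_le _ _
            _ ≤ (0 : WithBot ℕ) + ((idx f hf - 1 : ℕ) : WithBot ℕ) := by
                refine add_le_add Polynomial.degree_C_le ?_
                rw [Polynomial.degree_X_pow]
            _ = ((idx f hf - 1 : ℕ) : WithBot ℕ) := zero_add _
            _ < (M : WithBot ℕ) := by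
                rw [Nat.cast_lt]
                have := hidxM f hf
                omega
    | algebraMap c =>
        have hcom : (MvPolynomial.aeval v) (algebraMap ℂ (MvPolynomial (Fin N) ℂ) c)
            = algebraMap ℂ (DualNumber (Polynomial ℂ)) c := (MvPolynomial.aeval v).commutes c
        constructor
        · refine ⟨c, ?_⟩
          rw [hcom, TrivSqZeroExt.algebraMap_eq_inl', TrivSqZeroExt.fst_inl,
            Polynomial.algebraMap_eq]
        · rw [hcom, TrivSqZeroExt.algebraMap_eq_inl', TrivSqZeroExt.snd_inl]
          exact Submodule.zero_mem _
    | add y z hy hz ihy ihz =>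
        obtain ⟨⟨c1, hc1⟩, m1⟩ := ihy
        obtain ⟨⟨c2, hc2⟩, m2⟩ := ihz
        constructor
        · exact ⟨c1 + c2, by rw [map_add, TrivSqZeroExt.fst_add, hc1, hc2, Polynomial.C_add]⟩
        · rw [map_add, TrivSqZeroExt.snd_add]
          exact Submodule.add_mem _ m1 m2
    | mul y z hy hz ihy ihz =>
        obtain ⟨⟨c1, hc1⟩, m1⟩ := ihy
        obtain ⟨⟨c2, hc2⟩, m2⟩ := ihz
        constructor
        · exact ⟨c1 * c2, by rw [map_mul, TrivSqZeroExt.fst_mul, hc1, hc2, Polynomial.C_mul]⟩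
        · rw [map_mul, TrivSqZeroExt.snd_mul, hc1, hc2]
          refine Submodule.add_mem _ ?_ ?_
          · rw [smul_eq_mul]
            exact hCmul _ _ m2
          · rw [op_smul_eq_smul, smul_eq_mul]
            exact hCmul _ _ m1
  obtain ⟨-, hsnd⟩ := inv _ hQn
  rw [hkey n (by omega), TrivSqZeroExt.snd_inr, Polynomial.mem_degreeLT] at hsnd
  have hc : ((n:ℂ) * a n j₀ * x j₀ ^ (n-1)) ≠ 0 := by
    refine mul_ne_zero (mul_ne_zero ?_ ?_) ?_
    · exact_mod_cast (by omega : (n:ℕ) ≠ 0)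
    · exact ha n (by omega) j₀
    · exact pow_ne_zero _ hj₀
  rw [Polynomial.degree_C_mul_X_pow _ hc, Nat.cast_lt] at hsnd
  omega


end AuxGPS

/-- If `N ≥ 1` and `a_{ij}` (`i ≥ 1`, `1 ≤ j ≤ N`) are nonzero complex numbers,
`Q_i = Σ_j a_{ij} x_j^i`, and `A` is the subalgebra of `ℂ[x_1,...,x_N]` generated by the
`Q_i`, `i ≥ 1`, then `A` is finitely generated as a `ℂ`-algebra if and only if the only
common zero of the `Q_i` is the origin. -/
theorem adjoin_genPowerSums_fg_iff (N : ℕ) (hN : 1 ≤ N) (a : ℕ → Fin N → ℂ)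
    (ha : ∀ i : ℕ, 1 ≤ i → ∀ j : Fin N, a i j ≠ 0) :
    (Algebra.adjoin ℂ {f : MvPolynomial (Fin N) ℂ |
        ∃ i : ℕ, 1 ≤ i ∧ f = ∑ j : Fin N, C (a i j) * X j ^ i}).FG ↔
      ∀ x : Fin N → ℂ, (∀ i : ℕ, 1 ≤ i → ∑ j : Fin N, a i j * x j ^ i = 0) → x = 0 := by
  constructor
  · exact fun h x hx => AuxGPS.forward N a ha h x hx
  · exact fun h => AuxGPS.backward N a h
end
end

section
/- Let C be a commutative ring, I an ideal of C, C' a subring of C containing I, and B a subring of C'. If C, C' and C/I are all projective as B-modules, then C'/I is projective as a B-module. -/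
set_option maxHeartbeats 1000000 in


/-- Let `C` be a commutative ring, `I` an ideal of `C`, `C'` a subring of `C` containing
`I`, and `B` a subring of `C'` (formalized: `C` is a commutative `B`-algebra and `C'` is a
`B`-subalgebra of `C` containing `I`). If `C`, `C'` and `C/I` are all projective as
`B`-modules, then so is `C'/I`. -/
theorem quotient_projective_of_projective (B : Type*) [CommRing B]
    (C : Type*) [CommRing C] [Algebra B C] (C' : Subalgebra B C) (I : Ideal C)
    (hIC' : (I : Set C) ⊆ (C' : Set C))
    (hC : Module.Projective B C) (hC' : Module.Projective B C')
    (hCI : Module.Projective B (C ⧸ I)) :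
    Module.Projective B (↥C' ⧸ I.comap (C'.val : ↥C' →ₐ[B] C)) := by
  -- obtain a `B`-linear section `s : C⧸I → C` of the quotient map
  obtain ⟨s, hs⟩ := Module.projective_lifting_property ((I.mkQ).restrictScalars B)
    (LinearMap.id) (Submodule.mkQ_surjective I)
  set J : Ideal C' := I.comap (C'.val : ↥C' →ₐ[B] C) with hJ
  have hsec : ∀ x : C, I.mkQ (s (I.mkQ x)) = I.mkQ x := by
    intro x
    have := congrArg (fun f => f (I.mkQ x)) hs
    simpa using this
  have hmem : ∀ x : C', s (I.mkQ (x : C)) ∈ C' := by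
    intro x
    have h1 : s (I.mkQ (x : C)) - (x : C) ∈ I := by
      rw [← Submodule.Quotient.mk_eq_zero I]
      have : I.mkQ (s (I.mkQ (x : C)) - (x : C)) = 0 := by
        rw [map_sub, hsec, sub_self]
      simpa [Submodule.mkQ_apply] using this
    have : s (I.mkQ (x : C)) = (x : C) + (s (I.mkQ (x : C)) - (x : C)) := by ring
    rw [this]
    exact add_mem x.2 (hIC' h1)
  -- the B-linear map C' → C' given by x ↦ s(mk x)
  let g : C' →ₗ[B] C' :=
    { toFun := fun x => ⟨s (I.mkQ (x : C)), hmem x⟩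
      map_add' := by
        intro x y
        ext
        simp
      map_smul' := by
        intro c x
        ext
        simp [Subalgebra.coe_smul] }
  have hgker : J.restrictScalars B ≤ LinearMap.ker g := by
    intro x hx
    have hxI : (x : C) ∈ I := hx
    have h0 : I.mkQ (x : C) = 0 := (Submodule.Quotient.mk_eq_zero I).mpr hxI
    simp only [LinearMap.mem_ker]
    ext
    show s (I.mkQ (x : C)) = 0
    rw [h0, map_zero]
  let σ0 : (C' ⧸ J.restrictScalars B) →ₗ[B] C' := Submodule.liftQ _ g hgker
  let σ : (↥C' ⧸ J) →ₗ[B] C' :=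
    σ0 ∘ₗ (Submodule.Quotient.restrictScalarsEquiv B J).symm.toLinearMap
  refine Module.Projective.of_split σ ((Ideal.Quotient.mkₐ B J).toLinearMap) ?_
  apply LinearMap.ext
  intro x
  induction x using Submodule.Quotient.induction_on with
  | _ x =>
    simp only [LinearMap.comp_apply, LinearMap.id_apply, σ, σ0,
      LinearEquiv.coe_coe]
    rw [Submodule.Quotient.restrictScalarsEquiv_symm_mk, Submodule.liftQ_apply]
    show Ideal.Quotient.mk J (g x) = Submodule.Quotient.mk x
    have : g x - x ∈ J := by
      show s (I.mkQ (x : C)) - (x : C) ∈ I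
      rw [← Submodule.Quotient.mk_eq_zero I]
      have : I.mkQ (s (I.mkQ (x : C)) - (x : C)) = 0 := by
        rw [map_sub, hsec, sub_self]
      simpa [Submodule.mkQ_apply] using this
    rw [show Submodule.Quotient.mk x = Ideal.Quotient.mk J x from rfl]
    exact Ideal.Quotient.eq.mpr this
end
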